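/- Let (M_n)_{n=0,…,N} be a positive martingale on a filtered probability space such that M_0 is bounded by a constant K and the ratios satisfy |M_{n+1}/M_n - 1| ≤ C/√N almost surely for a constant C. Then for every positive integer p, E[(max_{n≤N} M_n)^p] ≤ K' for a constant K' depending only on p, C, K (not on N). -/

import Mathlib

open MeasureTheory Finset
open scoped ENNReal NNReal

section Aux

/-- Binomial remainder bound: `(1+R)^q ≤ 1 + qR + 2^q (max 1 ε)^q ε²` when `|R| ≤ ε`. -/
lemma binom_aux (q : ℕ) (hq : 2 ≤ q) (R E : ℝ) (hE : 0 ≤ E) (hR : |R| ≤ E) :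
    (1 + R) ^ q ≤ 1 + q * R + 2 ^ q * max 1 E ^ q * E ^ 2 := by
  have habs : 0 ≤ |R| := abs_nonneg R
  have hexp : (1 + R) ^ q = ∑ k ∈ range (q + 1), R ^ k * (q.choose k : ℝ) := by
    rw [add_comm]
    rw [add_pow]
    simp
  have hsplit : ∑ k ∈ range (q + 1), R ^ k * (q.choose k : ℝ)
      = (∑ k ∈ Ico 0 2, R ^ k * (q.choose k : ℝ))
        + ∑ k ∈ Ico 2 (q + 1), R ^ k * (q.choose k : ℝ) := by
    rw [Finset.sum_Ico_consecutive _ (by omega) (by omega), ← Finset.range_eq_Ico]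
  have h01 : (∑ k ∈ Ico 0 2, R ^ k * (q.choose k : ℝ)) = 1 + q * R := by
    rw [show Ico 0 2 = ({0, 1} : Finset ℕ) by decide]
    simp [Finset.sum_insert, Nat.choose_one_right]
    ring
  have hterm : ∀ k ∈ Ico 2 (q + 1),
      R ^ k * (q.choose k : ℝ) ≤ (max 1 E ^ q * E ^ 2) * (q.choose k : ℝ) := by
    intro k hk
    rw [Finset.mem_Ico] at hk
    have h1 : R ^ k ≤ |R| ^ k := by
      calc R ^ k ≤ |R ^ k| := le_abs_self _
      _ = |R| ^ k := abs_pow R k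
    have h2 : |R| ^ k ≤ E ^ k := pow_le_pow_left₀ habs hR k
    have h3 : E ^ k = E ^ 2 * E ^ (k - 2) := by
      rw [← pow_add]; congr 1; omega
    have h4 : E ^ (k - 2) ≤ max 1 E ^ (k - 2) :=
      pow_le_pow_left₀ hE (le_max_right 1 E) _
    have h5 : max 1 E ^ (k - 2) ≤ max 1 E ^ q :=
      pow_le_pow_right₀ (le_max_left 1 E) (by omega)
    have : R ^ k ≤ max 1 E ^ q * E ^ 2 := by
      calc R ^ k ≤ E ^ k := h1.trans h2
      _ = E ^ 2 * E ^ (k - 2) := h3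
      _ ≤ E ^ 2 * max 1 E ^ q := by
          apply mul_le_mul_of_nonneg_left (h4.trans h5) (by positivity)
      _ = max 1 E ^ q * E ^ 2 := mul_comm _ _
    exact mul_le_mul_of_nonneg_right this (by positivity)
  have hsum2 : ∑ k ∈ Ico 2 (q + 1), R ^ k * (q.choose k : ℝ)
      ≤ (max 1 E ^ q * E ^ 2) * 2 ^ q := by
    calc ∑ k ∈ Ico 2 (q + 1), R ^ k * (q.choose k : ℝ)
        ≤ ∑ k ∈ Ico 2 (q + 1), (max 1 E ^ q * E ^ 2) * (q.choose k : ℝ) :=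
          Finset.sum_le_sum hterm
      _ = (max 1 E ^ q * E ^ 2) * ∑ k ∈ Ico 2 (q + 1), (q.choose k : ℝ) := by
          rw [Finset.mul_sum]
      _ ≤ (max 1 E ^ q * E ^ 2) * 2 ^ q := by
          apply mul_le_mul_of_nonneg_left _ (by positivity)
          have hsub : Ico 2 (q + 1) ⊆ range (q + 1) := by
            rw [Finset.range_eq_Ico]; exact Finset.Ico_subset_Ico (by omega) le_rfl
          calc ∑ k ∈ Ico 2 (q + 1), (q.choose k : ℝ)
              ≤ ∑ k ∈ range (q + 1), (q.choose k : ℝ) :=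
                Finset.sum_le_sum_of_subset_of_nonneg hsub (by intros; positivity)
            _ = 2 ^ q := by
                rw [← Nat.cast_sum]
                rw [Nat.sum_range_choose]
                push_cast; ring
  rw [hexp, hsplit, h01]
  nlinarith [hsum2]

/-- Bernoulli inequality form: for positive `a`, nonneg `b`. -/
lemma bernoulli_ptwise (s : ℕ) (a b : ℝ) (ha : 0 < a) (hb : 0 ≤ b) :
    a ^ (s + 2) + (s + 2 : ℕ) * (a ^ (s + 1) * (b - a)) ≤ b ^ (s + 2) := by
  set R : ℝ := b / a - 1 with hRdef
  have hR2 : (-2 : ℝ) ≤ R := by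
    have : 0 ≤ b / a := div_nonneg hb ha.le
    simp only [hRdef]; linarith
  have hbern := one_add_mul_le_pow hR2 (s + 2)
  have hmul := mul_le_mul_of_nonneg_right hbern (pow_nonneg ha.le (s + 2))
  have h1Ra : (1 + R) * a = b := by rw [hRdef]; field_simp; ring
  have hrhs : (1 + R) ^ (s + 2) * a ^ (s + 2) = b ^ (s + 2) := by
    rw [← mul_pow, h1Ra]
  have hRa : R * a ^ (s + 2) = a ^ (s + 1) * (b - a) := by
    have : a ^ (s + 2) = a ^ (s + 1) * a := by ring
    rw [this, hRdef]
    field_simp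
  calc a ^ (s + 2) + (s + 2 : ℕ) * (a ^ (s + 1) * (b - a))
      = (1 + (↑(s + 2) : ℝ) * R) * a ^ (s + 2) := by rw [← hRa]; push_cast; ring
    _ ≤ (1 + R) ^ (s + 2) * a ^ (s + 2) := hmul
    _ = b ^ (s + 2) := hrhs

/-- One-step moment expansion bound. -/
lemma step_ptwise (s : ℕ) (E G a b : ℝ) (ha : 0 < a) (hE : 0 ≤ E)
    (hab : |b / a - 1| ≤ E) (hG : 2 ^ (s + 2) * max 1 E ^ (s + 2) * E ^ 2 ≤ G) :
    b ^ (s + 2) ≤ a ^ (s + 2) + (s + 2 : ℕ) * (a ^ (s + 1) * (b - a)) + G * a ^ (s + 2) := by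
  set R : ℝ := b / a - 1 with hRdef
  have hbin := binom_aux (s + 2) (by omega) R E hE hab
  have hmul := mul_le_mul_of_nonneg_right hbin (pow_nonneg ha.le (s + 2))
  have h1Ra : (1 + R) * a = b := by rw [hRdef]; field_simp; ring
  have hlhs : (1 + R) ^ (s + 2) * a ^ (s + 2) = b ^ (s + 2) := by
    rw [← mul_pow, h1Ra]
  have hRa : R * a ^ (s + 2) = a ^ (s + 1) * (b - a) := by
    have : a ^ (s + 2) = a ^ (s + 1) * a := by ring
    rw [this, hRdef]
    field_simp
  have hGa : (2 ^ (s + 2) * max 1 E ^ (s + 2) * E ^ 2) * a ^ (s + 2) ≤ G * a ^ (s + 2) :=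
    mul_le_mul_of_nonneg_right hG (pow_nonneg ha.le _)
  calc b ^ (s + 2) = (1 + R) ^ (s + 2) * a ^ (s + 2) := hlhs.symm
    _ ≤ (1 + (↑(s + 2) : ℝ) * R + 2 ^ (s + 2) * max 1 E ^ (s + 2) * E ^ 2) * a ^ (s + 2) := hmul
    _ = a ^ (s + 2) + (↑(s + 2) : ℝ) * (R * a ^ (s + 2))
        + (2 ^ (s + 2) * max 1 E ^ (s + 2) * E ^ 2) * a ^ (s + 2) := by ring
    _ ≤ a ^ (s + 2) + (↑(s + 2) : ℝ) * (a ^ (s + 1) * (b - a)) + G * a ^ (s + 2) := by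
        rw [hRa]; linarith

end Aux

/-- Uniform `L^p` moment bound for positive discrete martingales with multiplicative
increments of order `1/√N` (step (i) of Lemma 3.7, Kusuoka's estimate): the bound
depends only on `p`, `C` and `K`, not on `N`. -/
theorem stmt_16 (p : ℕ) (hp : 0 < p) (C K : ℝ) (hC : 0 ≤ C) (hK : 0 ≤ K) :
    ∃ K' : ℝ, ∀ (Ω : Type) (m0 : MeasurableSpace Ω) (μ : Measure Ω)
      (_ : IsProbabilityMeasure μ) (𝒢 : Filtration ℕ m0) (N : ℕ) (_ : 0 < N)
      (M : ℕ → Ω → ℝ),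
      Martingale M 𝒢 μ →
      (∀ n, ∀ᵐ ω ∂μ, 0 < M n ω) →
      (∀ᵐ ω ∂μ, M 0 ω ≤ K) →
      (∀ n, n < N → ∀ᵐ ω ∂μ, |M (n + 1) ω / M n ω - 1| ≤ C / Real.sqrt N) →
      ∫ ω, ((Finset.range (N + 1)).sup' Finset.nonempty_range_add_one
          (fun n => M n ω)) ^ p ∂μ ≤ K' := by
  classical
  set s := 2 * p with hs
  set D : ℝ := 2 ^ (s + 2) * max 1 C ^ (s + 2) * C ^ 2 with hD
  have hD0 : 0 ≤ D := by positivity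
  refine ⟨1 + 2 ^ (p + 1) * (K ^ (s + 2) * Real.exp D), ?_⟩
  intro Ω m0 μ hprob 𝒢 N hN M hM hpos h0 hratio
  have hN0 : (0 : ℝ) < N := by exact_mod_cast hN
  set E : ℝ := C / Real.sqrt N with hEdef
  have hE0 : 0 ≤ E := div_nonneg hC (Real.sqrt_nonneg _)
  have hEC : E ≤ C := by
    apply div_le_self hC
    rw [show (1 : ℝ) = Real.sqrt 1 by simp]
    exact Real.sqrt_le_sqrt (by exact_mod_cast hN)
  have hE2 : E ^ 2 = C ^ 2 / N := by
    rw [hEdef, div_pow, Real.sq_sqrt hN0.le]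
  have hGDN : 2 ^ (s + 2) * max 1 E ^ (s + 2) * E ^ 2 ≤ D / N := by
    have hmaxle : max 1 E ≤ max 1 C := max_le_max le_rfl hEC
    have h1 : 2 ^ (s + 2) * max 1 E ^ (s + 2) * E ^ 2
        = 2 ^ (s + 2) * max 1 E ^ (s + 2) * C ^ 2 / N := by rw [hE2]; ring
    rw [h1, hD, div_le_div_iff₀ hN0 hN0]
    have h2 : 2 ^ (s + 2) * max 1 E ^ (s + 2) * C ^ 2
        ≤ 2 ^ (s + 2) * max 1 C ^ (s + 2) * C ^ 2 := by
      gcongr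
    nlinarith [hN0, h2, sq_nonneg C]
  have hMs : ∀ n, StronglyMeasurable (M n) := fun n => (hM.stronglyAdapted n).mono (𝒢.le n)
  set B : ℝ := K * (1 + E) ^ N with hB
  have hB0 : 0 ≤ B := by positivity
  have hbd : ∀ n, n ≤ N → ∀ᵐ ω ∂μ, M n ω ≤ K * (1 + E) ^ n := by
    intro n
    induction n with
    | zero => intro _; simpa using h0
    | succ n ih =>
      intro hn1
      have hnN : n < N := by omega
      filter_upwards [ih (by omega), hpos n, hratio n hnN] with ω h1 h2 h3
      have h4 : M (n + 1) ω / M n ω ≤ 1 + E := by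
        have := (abs_le.mp h3).2; linarith
      rw [div_le_iff₀ h2] at h4
      calc M (n + 1) ω ≤ (1 + E) * M n ω := by linarith
        _ ≤ (1 + E) * (K * (1 + E) ^ n) := by
            apply mul_le_mul_of_nonneg_left h1 (by positivity)
        _ = K * (1 + E) ^ (n + 1) := by ring
  have hbdB : ∀ n, n ≤ N → ∀ᵐ ω ∂μ, M n ω ≤ B := by
    intro n hn
    filter_upwards [hbd n hn] with ω h1
    calc M n ω ≤ K * (1 + E) ^ n := h1
      _ ≤ B := by
          rw [hB]
          apply mul_le_mul_of_nonneg_left _ hK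
          exact pow_le_pow_right₀ (by linarith) hn
  have hint : ∀ n, n ≤ N → ∀ r : ℕ, Integrable (fun ω => M n ω ^ r) μ := by
    intro n hn r
    apply Integrable.mono' (integrable_const (B ^ r)) ((hMs n).measurable.pow_const r).aestronglyMeasurable
    filter_upwards [hpos n, hbdB n hn] with ω h1 h2
    rw [Real.norm_eq_abs, abs_pow, abs_of_pos h1]
    exact pow_le_pow_left₀ h1.le h2 r
  have hq_even : Even (s + 2) := ⟨p + 1, by omega⟩
  -- the product integrand
  have hprod : ∀ n, n < N →
      Integrable (fun ω => M n ω ^ (s + 1) * (M (n + 1) ω - M n ω)) μ := by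
    intro n hn
    apply Integrable.mono' (integrable_const (B ^ (s + 1) * (B + B)))
      (((hMs n).measurable.pow_const (s + 1)).mul
        ((hMs (n + 1)).measurable.sub (hMs n).measurable)).aestronglyMeasurable
    filter_upwards [hpos n, hpos (n + 1), hbdB n hn.le, hbdB (n + 1) hn] with ω p1 p2 b1 b2
    rw [Real.norm_eq_abs, Pi.mul_apply, abs_mul]
    have h1 : |M n ω ^ (s + 1)| ≤ B ^ (s + 1) := by
      rw [abs_pow, abs_of_pos p1]; exact pow_le_pow_left₀ p1.le b1 _
    have h2 : |M (n + 1) ω - M n ω| ≤ B + B := by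
      calc |M (n + 1) ω - M n ω| ≤ |M (n + 1) ω| + |M n ω| := abs_sub _ _
        _ ≤ B + B := by
            rw [abs_of_pos p1, abs_of_pos p2]; exact add_le_add b2 b1
    exact mul_le_mul h1 h2 (abs_nonneg _) (by positivity)
  -- conditional expectation of the product vanishes
  have hcondprod : ∀ n, n < N →
      μ[fun ω => M n ω ^ (s + 1) * (M (n + 1) ω - M n ω)|𝒢 n] =ᵐ[μ] 0 := by
    intro n hn
    have hXsm : StronglyMeasurable[𝒢 n] (fun ω => M n ω ^ (s + 1)) := (hM.stronglyAdapted n).pow _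
    have hYint : Integrable (fun ω => M (n + 1) ω - M n ω) μ :=
      (hM.integrable (n + 1)).sub (hM.integrable n)
    have hYcond : μ[(fun ω => M (n + 1) ω - M n ω)|𝒢 n] =ᵐ[μ] 0 := by
      have h1 : μ[M (n + 1) - M n|𝒢 n] =ᵐ[μ] μ[M (n + 1)|𝒢 n] - μ[M n|𝒢 n] :=
        condExp_sub (hM.integrable _) (hM.integrable _) _
      have h2 : μ[M (n + 1)|𝒢 n] =ᵐ[μ] M n := hM.condExp_ae_eq (Nat.le_succ n)
      have h3 : μ[M n|𝒢 n] =ᵐ[μ] M n := hM.condExp_ae_eq le_rfl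
      have h4 : (fun ω => M (n + 1) ω - M n ω) = M (n + 1) - M n := rfl
      rw [h4]
      filter_upwards [h1, h2, h3] with ω e1 e2 e3
      simp only [Pi.sub_apply] at e1 e2 e3 ⊢
      simp [e1, e2, e3]
    have hpull := condExp_mul_of_stronglyMeasurable_left hXsm
      (show Integrable ((fun ω => M n ω ^ (s + 1)) * fun ω => M (n + 1) ω - M n ω) μ
        from hprod n hn) hYint
    have heq : (fun ω => M n ω ^ (s + 1) * (M (n + 1) ω - M n ω))
        = (fun ω => M n ω ^ (s + 1)) * fun ω => M (n + 1) ω - M n ω := rfl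
    rw [heq]
    filter_upwards [hpull, hYcond] with ω e1 e2
    simp only [Pi.mul_apply] at e1 ⊢
    rw [e1, e2]
    simp
  have hkey : ∀ n, n < N → ∫ ω, M n ω ^ (s + 1) * (M (n + 1) ω - M n ω) ∂μ = 0 := by
    intro n hn
    rw [← integral_condExp (𝒢.le n)
      (f := fun ω => M n ω ^ (s + 1) * (M (n + 1) ω - M n ω)),
      integral_congr_ae (hcondprod n hn)]
    simp
  -- submartingale step
  set f : ℕ → Ω → ℝ := fun n ω => M (min n N) ω ^ (s + 2) with hf
  have hfadp : StronglyAdapted 𝒢 f := fun n =>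
    ((hM.stronglyAdapted (min n N)).mono (𝒢.mono (min_le_left n N))).pow _
  have hfint : ∀ n, Integrable (f n) μ := fun n => hint (min n N) (min_le_right _ _) _
  have hfnn : (0 : ℕ → Ω → ℝ) ≤ f := by
    intro n ω
    exact hq_even.pow_nonneg _
  have hsubstep : ∀ n, f n ≤ᵐ[μ] μ[f (n + 1)|𝒢 n] := by
    intro n
    by_cases hn : n < N
    · have hmin1 : min n N = n := min_eq_left hn.le
      have hmin2 : min (n + 1) N = n + 1 := min_eq_left (by omega)
      have hfe1 : f n = fun ω => M n ω ^ (s + 2) := by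
        funext ω; simp only [hf, hmin1]
      have hfe2 : f (n + 1) = fun ω => M (n + 1) ω ^ (s + 2) := by
        funext ω; simp only [hf, hmin2]
      rw [hfe1, hfe2]
      have hptw : ((fun ω => M n ω ^ (s + 2)) + ((s + 2 : ℕ) : ℝ) •
            fun ω => M n ω ^ (s + 1) * (M (n + 1) ω - M n ω))
          ≤ᵐ[μ] fun ω => M (n + 1) ω ^ (s + 2) := by
        filter_upwards [hpos n, hpos (n + 1)] with ω p1 p2
        have h := bernoulli_ptwise s (M n ω) (M (n + 1) ω) p1 p2.le
        simp only [Pi.add_apply, Pi.smul_apply, smul_eq_mul]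
        exact h
      have hgint : Integrable ((fun ω => M n ω ^ (s + 2)) + ((s + 2 : ℕ) : ℝ) •
            fun ω => M n ω ^ (s + 1) * (M (n + 1) ω - M n ω)) μ :=
        (hint n hn.le (s + 2)).add ((hprod n hn).smul _)
      have hmono := condExp_mono (m := 𝒢 n) hgint (hint (n + 1) hn (s + 2)) hptw
      have h1 := condExp_add (μ := μ) (m := 𝒢 n) (hint n hn.le (s + 2))
        ((hprod n hn).smul (((s + 2 : ℕ) : ℝ)))
      have h3 := condExp_smul (μ := μ) (m := 𝒢 n) (((s + 2 : ℕ) : ℝ))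
        (fun ω => M n ω ^ (s + 1) * (M (n + 1) ω - M n ω))
      have h2 : μ[(fun ω => M n ω ^ (s + 2))|𝒢 n] = fun ω => M n ω ^ (s + 2) :=
        condExp_of_stronglyMeasurable (𝒢.le n) ((hM.stronglyAdapted n).pow _) (hint n hn.le _)
      filter_upwards [hmono, h1, h3, hcondprod n hn] with ω e0 e1 e3 e4
      have e5 : M n ω ^ (s + 2) ≤ (μ[((fun ω => M n ω ^ (s + 2)) + ((s + 2 : ℕ) : ℝ) •
          fun ω => M n ω ^ (s + 1) * (M (n + 1) ω - M n ω))|𝒢 n]) ω := by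
        rw [e1]
        simp only [Pi.add_apply, h2, e3, Pi.smul_apply, smul_eq_mul, e4, Pi.zero_apply,
          mul_zero, add_zero]
        exact le_refl _
      exact e5.trans e0
    · have hnN : N ≤ n := le_of_not_gt hn
      have hfe : f (n + 1) = f n := by
        simp only [hf, min_eq_right hnN, min_eq_right (by omega : N ≤ n + 1)]
      rw [hfe, condExp_of_stronglyMeasurable (𝒢.le n) (hfadp n) (hfint n)]
  have hfsub : Submartingale f 𝒢 μ := submartingale_nat hfadp hfint hsubstep
  -- moment recursion
  have hrec : ∀ n, n < N →
      ∫ ω, M (n + 1) ω ^ (s + 2) ∂μ ≤ (1 + D / N) * ∫ ω, M n ω ^ (s + 2) ∂μ := by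
    intro n hn
    have hpt : ∀ᵐ ω ∂μ, M (n + 1) ω ^ (s + 2) ≤
        M n ω ^ (s + 2) + ((s + 2 : ℕ) : ℝ) * (M n ω ^ (s + 1) * (M (n + 1) ω - M n ω))
          + (D / N) * M n ω ^ (s + 2) := by
      filter_upwards [hpos n, hratio n hn] with ω p1 r1
      exact step_ptwise s E (D / N) _ _ p1 hE0 r1 hGDN
    have hint2 : Integrable (fun ω => M n ω ^ (s + 1) * (M (n + 1) ω - M n ω)) μ := hprod n hn
    have i3 : Integrable (fun ω => M n ω ^ (s + 2)) μ := hint n hn.le (s + 2)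
    have i4 : Integrable (fun ω => ((s + 2 : ℕ) : ℝ) *
        (M n ω ^ (s + 1) * (M (n + 1) ω - M n ω))) μ := hint2.const_mul _
    have i1 : Integrable (fun ω => M n ω ^ (s + 2) + ((s + 2 : ℕ) : ℝ) *
        (M n ω ^ (s + 1) * (M (n + 1) ω - M n ω))) μ := i3.add i4
    have i2 : Integrable (fun ω => (D / N) * M n ω ^ (s + 2)) μ := i3.const_mul _
    have hRHSint : Integrable (fun ω =>
        M n ω ^ (s + 2) + ((s + 2 : ℕ) : ℝ) * (M n ω ^ (s + 1) * (M (n + 1) ω - M n ω))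
          + (D / N) * M n ω ^ (s + 2)) μ := i1.add i2
    have h1 := integral_mono_ae (hint (n + 1) hn (s + 2)) hRHSint hpt
    rw [integral_add i1 i2, integral_add i3 i4,
      integral_const_mul, integral_const_mul, hkey n hn] at h1
    calc ∫ ω, M (n + 1) ω ^ (s + 2) ∂μ
        ≤ ∫ ω, M n ω ^ (s + 2) ∂μ + ((s + 2 : ℕ) : ℝ) * 0
          + D / N * ∫ ω, M n ω ^ (s + 2) ∂μ := h1
      _ = (1 + D / N) * ∫ ω, M n ω ^ (s + 2) ∂μ := by ring
  have hmom : ∀ n, n ≤ N → ∫ ω, M n ω ^ (s + 2) ∂μ ≤ K ^ (s + 2) * (1 + D / N) ^ n := by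
    intro n
    induction n with
    | zero =>
      intro _
      have h1 : ∀ᵐ ω ∂μ, M 0 ω ^ (s + 2) ≤ K ^ (s + 2) := by
        filter_upwards [hpos 0, h0] with ω p1 b1
        exact pow_le_pow_left₀ p1.le b1 _
      have h2 := integral_mono_ae (hint 0 (Nat.zero_le N) (s + 2)) (integrable_const _) h1
      rw [pow_zero, mul_one]
      simpa [integral_const] using h2
    | succ n ih =>
      intro hn1
      have hnN : n < N := by omega
      calc ∫ ω, M (n + 1) ω ^ (s + 2) ∂μ
          ≤ (1 + D / N) * ∫ ω, M n ω ^ (s + 2) ∂μ := hrec n hnN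
        _ ≤ (1 + D / N) * (K ^ (s + 2) * (1 + D / N) ^ n) := by
            apply mul_le_mul_of_nonneg_left (ih (by omega)) (by positivity)
        _ = K ^ (s + 2) * (1 + D / N) ^ (n + 1) := by ring
  set I : ℝ := ∫ ω, M N ω ^ (s + 2) ∂μ with hIdef
  have hI0 : 0 ≤ I := integral_nonneg fun ω => hq_even.pow_nonneg _
  have hI : I ≤ K ^ (s + 2) * Real.exp D := by
    calc I ≤ K ^ (s + 2) * (1 + D / N) ^ N := hmom N le_rfl
      _ ≤ K ^ (s + 2) * Real.exp D := by
          apply mul_le_mul_of_nonneg_left _ (by positivity)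
          calc (1 + D / N) ^ N ≤ Real.exp (D / N) ^ N := by
                apply pow_le_pow_left₀ (by positivity)
                linarith [Real.add_one_le_exp (D / N)]
            _ = Real.exp ((N : ℝ) * (D / N)) := (Real.exp_nat_mul _ N).symm
            _ = Real.exp D := by
                congr 1
                field_simp
  -- the sup process
  set S : Ω → ℝ := fun ω => (Finset.range (N + 1)).sup' Finset.nonempty_range_add_one
    (fun n => M n ω) with hSdef
  set J := Nat.log 2 ⌊B⌋₊ with hJ
  set A : ℕ → Set Ω := fun j => {ω | (((2 : ℝ≥0) ^ (j * (s + 2)) : ℝ≥0) : ℝ) ≤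
    (Finset.range (N + 1)).sup' Finset.nonempty_range_add_one fun k => f k ω} with hA
  have hcoe : ∀ j : ℕ, (((2 : ℝ≥0) ^ (j * (s + 2)) : ℝ≥0) : ℝ) = (2 : ℝ) ^ (j * (s + 2)) := by
    intro j; push_cast; ring
  have hfmeas : ∀ k, Measurable (f k) := fun k => ((hMs (min k N)).measurable).pow_const _
  have hFmeas : Measurable (fun ω =>
      (Finset.range (N + 1)).sup' Finset.nonempty_range_add_one fun k => f k ω) :=
    Finset.measurable_range_sup'' fun k _ => hfmeas k
  have hAmeas : ∀ j, MeasurableSet (A j) := fun j =>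
    measurableSet_le measurable_const hFmeas
  have hSmeas : Measurable S := Finset.measurable_range_sup'' fun k _ => (hMs k).measurable
  have hgood : ∀ᵐ ω ∂μ, ∀ k, k ≤ N → 0 < M k ω ∧ M k ω ≤ B := by
    rw [MeasureTheory.ae_all_iff]
    intro k
    by_cases hk : k ≤ N
    · filter_upwards [hpos k, hbdB k hk] with ω h1 h2 _
      exact ⟨h1, h2⟩
    · filter_upwards with ω hk'
      exact absurd hk' hk
  have hSbound : ∀ᵐ ω ∂μ, 0 < S ω ∧ S ω ≤ B := by
    filter_upwards [hgood] with ω hω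
    obtain ⟨k0, hk0mem, hk0eq⟩ :=
      Finset.exists_mem_eq_sup' (s := Finset.range (N + 1)) Finset.nonempty_range_add_one (fun n => M n ω)
    have hk0N : k0 ≤ N := by
      have := Finset.mem_range.mp hk0mem; omega
    have hSeq : S ω = M k0 ω := by rw [hSdef]; exact hk0eq
    constructor
    · rw [hSeq]; exact (hω k0 hk0N).1
    · have h2 : S ω ≤ B := by
        rw [hSdef]
        exact Finset.sup'_le _ _ fun k hk =>
          (hω k (by have := Finset.mem_range.mp hk; omega)).2
      exact h2
  -- pointwise dyadic bound
  have hptdyadic : ∀ᵐ ω ∂μ, S ω ^ p ≤ 1 + ∑ j ∈ Finset.range (J + 1),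
      (2 : ℝ) ^ ((j + 1) * p) * Set.indicator (A j) (fun _ => (1 : ℝ)) ω := by
    filter_upwards [hgood, hSbound] with ω hω hSb
    obtain ⟨hSpos, hSB⟩ := hSb
    have hsumnn : 0 ≤ ∑ j ∈ Finset.range (J + 1),
        (2 : ℝ) ^ ((j + 1) * p) * Set.indicator (A j) (fun _ => (1 : ℝ)) ω :=
      Finset.sum_nonneg fun j _ => mul_nonneg (by positivity)
        (Set.indicator_nonneg (fun _ _ => zero_le_one) ω)
    by_cases hS1 : S ω ≤ 1
    · have h1 : S ω ^ p ≤ 1 := pow_le_one₀ hSpos.le hS1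
      linarith
    · push_neg at hS1
      set m := ⌊S ω⌋₊ with hm
      have hm1 : 1 ≤ m := Nat.le_floor (by exact_mod_cast hS1.le)
      set j := Nat.log 2 m with hj
      have hjle : (2 : ℝ) ^ j ≤ S ω := by
        have h1 : 2 ^ j ≤ m := Nat.pow_log_le_self 2 (by omega)
        calc (2 : ℝ) ^ j ≤ (m : ℝ) := by exact_mod_cast h1
          _ ≤ S ω := Nat.floor_le hSpos.le
      have hjup : S ω < (2 : ℝ) ^ (j + 1) := by
        have h1 : m < 2 ^ (j + 1) := Nat.lt_pow_succ_log_self one_lt_two m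
        have h2 : S ω < (m : ℝ) + 1 := Nat.lt_floor_add_one _
        have h3 : ((m : ℝ) + 1) ≤ (2 : ℝ) ^ (j + 1) := by exact_mod_cast Nat.succ_le_of_lt h1
        linarith
      have hjJ : j ≤ J := Nat.log_mono_right (Nat.floor_le_floor hSB)
      -- membership in A j
      obtain ⟨k0, hk0mem, hk0eq⟩ :=
        Finset.exists_mem_eq_sup' (s := Finset.range (N + 1)) Finset.nonempty_range_add_one (fun n => M n ω)
      have hk0N : k0 ≤ N := by
        have := Finset.mem_range.mp hk0mem; omega
      have hSeq : S ω = M k0 ω := by rw [hSdef]; exact hk0eq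
      have hmemA : ω ∈ A j := by
        rw [hA]
        show (((2 : ℝ≥0) ^ (j * (s + 2)) : ℝ≥0) : ℝ) ≤ _
        rw [hcoe j]
        have h1 : ((2 : ℝ) ^ j) ^ (s + 2) ≤ (M k0 ω) ^ (s + 2) := by
          apply pow_le_pow_left₀ (by positivity)
          rw [← hSeq]; exact hjle
        have h3 : f k0 ω = (M k0 ω) ^ (s + 2) := by
          simp only [hf, min_eq_left hk0N]
        calc (2 : ℝ) ^ (j * (s + 2)) = ((2 : ℝ) ^ j) ^ (s + 2) := by rw [pow_mul]
          _ ≤ (M k0 ω) ^ (s + 2) := h1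
          _ = f k0 ω := h3.symm
          _ ≤ _ := Finset.le_sup' (fun k => f k ω) hk0mem
      have hterm : S ω ^ p ≤ (2 : ℝ) ^ ((j + 1) * p)
          * Set.indicator (A j) (fun _ => (1 : ℝ)) ω := by
        rw [Set.indicator_of_mem hmemA, mul_one]
        calc S ω ^ p ≤ ((2 : ℝ) ^ (j + 1)) ^ p := pow_le_pow_left₀ hSpos.le hjup.le p
          _ = (2 : ℝ) ^ ((j + 1) * p) := by rw [← pow_mul]
      have hsingle : (2 : ℝ) ^ ((j + 1) * p) * Set.indicator (A j) (fun _ => (1 : ℝ)) ω ≤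
          ∑ j' ∈ Finset.range (J + 1),
            (2 : ℝ) ^ ((j' + 1) * p) * Set.indicator (A j') (fun _ => (1 : ℝ)) ω :=
        Finset.single_le_sum
          (f := fun j' => (2 : ℝ) ^ ((j' + 1) * p) * Set.indicator (A j') (fun _ => (1 : ℝ)) ω)
          (fun i _ => mul_nonneg (by positivity)
            (Set.indicator_nonneg (fun _ _ => zero_le_one) ω))
          (Finset.mem_range.mpr (by omega))
      linarith
  -- integrability
  have hSpInt : Integrable (fun ω => S ω ^ p) μ := by
    apply Integrable.mono' (integrable_const (B ^ p)) (hSmeas.pow_const p).aestronglyMeasurable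
    filter_upwards [hSbound] with ω hω
    rw [Real.norm_eq_abs, abs_pow, abs_of_pos hω.1]
    exact pow_le_pow_left₀ hω.1.le hω.2 p
  have hRHSint : Integrable (fun ω => 1 + ∑ j ∈ Finset.range (J + 1),
      (2 : ℝ) ^ ((j + 1) * p) * Set.indicator (A j) (fun _ => (1 : ℝ)) ω) μ := by
    apply (integrable_const (1 : ℝ)).add
    apply integrable_finset_sum
    intro j _
    exact (((integrable_const (1 : ℝ)).indicator (hAmeas j)).const_mul _)
  -- measure bound from the maximal inequality
  have hIeq : ∫ ω, f N ω ∂μ = I := by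
    rw [hIdef]
    congr 1
    funext ω
    simp [hf, min_self]
  have hAj : ∀ j, (μ (A j)).toReal ≤ I / 2 ^ (j * (s + 2)) := by
    intro j
    have hmax := maximal_ineq hfsub hfnn (ε := (2 : ℝ≥0) ^ (j * (s + 2))) N
    have hAle : ∀ t : Set Ω, ENNReal.ofReal (∫ ω in t, f N ω ∂μ) ≤ ENNReal.ofReal I := by
      intro t
      apply ENNReal.ofReal_le_ofReal
      rw [← hIeq]
      exact setIntegral_le_integral (hfint N) (Filter.Eventually.of_forall fun ω => hfnn N ω)
    have h2 : (2 : ℝ≥0) ^ (j * (s + 2)) • μ (A j) ≤ ENNReal.ofReal I := by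
      simp only [hA]
      exact hmax.trans (hAle _)
    have h3 := ENNReal.toReal_mono ENNReal.ofReal_ne_top h2
    simp only [ENNReal.smul_def, smul_eq_mul, ENNReal.toReal_mul, ENNReal.coe_toReal,
      ENNReal.toReal_ofReal hI0, NNReal.coe_pow, NNReal.coe_ofNat] at h3
    rw [le_div_iff₀ (by positivity)]
    linarith
  -- final computation
  have hfinal := integral_mono_ae hSpInt hRHSint hptdyadic
  have hRHSval : ∫ ω, (1 + ∑ j ∈ Finset.range (J + 1),
      (2 : ℝ) ^ ((j + 1) * p) * Set.indicator (A j) (fun _ => (1 : ℝ)) ω) ∂μ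
      = 1 + ∑ j ∈ Finset.range (J + 1), (2 : ℝ) ^ ((j + 1) * p) * (μ (A j)).toReal := by
    rw [integral_add (integrable_const 1) (integrable_finset_sum _ fun j _ =>
      (((integrable_const (1 : ℝ)).indicator (hAmeas j)).const_mul _))]
    congr 1
    · simp
    rw [integral_finset_sum _ fun j _ =>
      (((integrable_const (1 : ℝ)).indicator (hAmeas j)).const_mul _)]
    apply Finset.sum_congr rfl
    intro j _
    rw [integral_const_mul]
    congr 1
    have : (Set.indicator (A j) (fun _ => (1 : ℝ))) = (A j).indicator 1 := rfl
    rw [this, MeasureTheory.integral_indicator_one (hAmeas j)]; rfl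
  have hsumbound : ∑ j ∈ Finset.range (J + 1), (2 : ℝ) ^ ((j + 1) * p) * (μ (A j)).toReal
      ≤ 2 ^ (p + 1) * I := by
    have hterm : ∀ j ∈ Finset.range (J + 1),
        (2 : ℝ) ^ ((j + 1) * p) * (μ (A j)).toReal ≤ I * (2 ^ p * (1 / 2) ^ j) := by
      intro j _
      have h1 : (2 : ℝ) ^ ((j + 1) * p) * (μ (A j)).toReal
          ≤ (2 : ℝ) ^ ((j + 1) * p) * (I / 2 ^ (j * (s + 2))) :=
        mul_le_mul_of_nonneg_left (hAj j) (by positivity)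
      have h2 : (2 : ℝ) ^ ((j + 1) * p) * (I / 2 ^ (j * (s + 2)))
          = I * ((2 : ℝ) ^ ((j + 1) * p) / 2 ^ (j * (s + 2))) := by ring
      have h3 : (2 : ℝ) ^ ((j + 1) * p) / 2 ^ (j * (s + 2)) ≤ 2 ^ p * (1 / 2) ^ j := by
        have he : (2 : ℝ) ^ p * (1 / 2) ^ j = 2 ^ p / 2 ^ j := by
          rw [div_pow, one_pow]; ring
        rw [he, div_le_div_iff₀ (by positivity) (by positivity), ← pow_add, ← pow_add]
        apply pow_le_pow_right₀ one_le_two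
        have : (j + 1) * p + j ≤ p + j * (s + 2) := by
          rw [hs]
          nlinarith [Nat.zero_le (j * p), Nat.zero_le j]
        exact this
      calc (2 : ℝ) ^ ((j + 1) * p) * (μ (A j)).toReal
          ≤ I * ((2 : ℝ) ^ ((j + 1) * p) / 2 ^ (j * (s + 2))) := by rw [← h2]; exact h1
        _ ≤ I * (2 ^ p * (1 / 2) ^ j) := mul_le_mul_of_nonneg_left h3 hI0
    calc ∑ j ∈ Finset.range (J + 1), (2 : ℝ) ^ ((j + 1) * p) * (μ (A j)).toReal
        ≤ ∑ j ∈ Finset.range (J + 1), I * (2 ^ p * (1 / 2) ^ j) :=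
          Finset.sum_le_sum hterm
      _ = I * 2 ^ p * ∑ j ∈ Finset.range (J + 1), ((1 : ℝ) / 2) ^ j := by
          rw [Finset.mul_sum]; apply Finset.sum_congr rfl; intros; ring
      _ ≤ I * 2 ^ p * 2 := by
          apply mul_le_mul_of_nonneg_left (sum_geometric_two_le _) (by positivity)
      _ = 2 ^ (p + 1) * I := by ring
  calc ∫ ω, S ω ^ p ∂μ
      ≤ 1 + ∑ j ∈ Finset.range (J + 1), (2 : ℝ) ^ ((j + 1) * p) * (μ (A j)).toReal := by
        rw [← hRHSval]; exact hfinal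
    _ ≤ 1 + 2 ^ (p + 1) * I := by linarith
    _ ≤ 1 + 2 ^ (p + 1) * (K ^ (s + 2) * Real.exp D) := by
        have : (0:ℝ) ≤ 2 ^ (p + 1) := by positivity
        nlinarith
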